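/- Let n be a positive integer, A and B finite abelian groups, and W : A × B → ℤ/nℤ a biadditive pairing that is nondegenerate, i.e. its left kernel {a ∈ A : W(a,b) = 0 for all b ∈ B} and its right kernel {b ∈ B : W(a,b) = 0 for all a ∈ A} are both trivial. Then for every subgroup K ⊆ A one has |K| · |K^⊥| = |B|. -/

import Mathlib

/-- The orthogonal `K^⊥ = {b ∈ B | W(k,b) = 0 for all k ∈ K}` of a subgroup
`K ⊆ A` with respect to a biadditive pairing `W : A × B → ℤ/nℤ`. -/
def orthSubgroup {A B : Type*} [AddCommGroup A] [AddCommGroup B] {n : ℕ}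
    (W : A →+ B →+ ZMod n) (K : AddSubgroup A) : AddSubgroup B where
  carrier := {b | ∀ a ∈ K, W a b = 0}
  zero_mem' := by intro a _; simp
  add_mem' := by
    intro b c hb hc a ha
    rw [map_add, hb a ha, hc a ha, add_zero]
  neg_mem' := by
    intro b hb a ha
    rw [map_neg, hb a ha, neg_zero]

/-- Auxiliary: `|Hom(G, ZMod n)| ≤ |G|` for a finite abelian group `G`,
proved by embedding `Hom(G, ZMod n)` into the complex characters of `G`. -/
lemma card_hom_zmod_le (n : ℕ) [NeZero n] (G : Type*) [AddCommGroup G] [Finite G] :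
    Nat.card (G →+ ZMod n) ≤ Nat.card G := by
  cases nonempty_fintype G
  haveI : Finite (G →+ ZMod n) := Finite.of_injective _ DFunLike.coe_injective
  have hinj : Function.Injective
      (fun c : G →+ ZMod n => (ZMod.stdAddChar (N := n)).compAddMonoidHom c) := by
    intro c c' h
    ext g
    have := DFunLike.congr_fun h g
    simpa using ZMod.injective_stdAddChar (by simpa using this)
  calc Nat.card (G →+ ZMod n) ≤ Nat.card (AddChar G ℂ) := Nat.card_le_card_of_injective _ hinj
    _ = Nat.card G := by
        simp [Nat.card_eq_fintype_card, AddChar.card_eq]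

/-- For a nondegenerate biadditive pairing `W : A × B → ℤ/nℤ` of finite abelian
groups and every subgroup `K ⊆ A`, one has `|K| · |K^⊥| = |B|`. -/
theorem card_mul_card_orth (n : ℕ) (hn : 0 < n)
    (A B : Type*) [AddCommGroup A] [AddCommGroup B] [Fintype A] [Fintype B]
    (W : A →+ B →+ ZMod n)
    (hleft : ∀ a : A, (∀ b : B, W a b = 0) → a = 0)
    (hright : ∀ b : B, (∀ a : A, W a b = 0) → b = 0)
    (K : AddSubgroup A) :
    Nat.card K * Nat.card (orthSubgroup W K) = Nat.card B := by
  haveI : NeZero n := ⟨hn.ne'⟩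
  set H := orthSubgroup W K with hH
  -- the map `B ⧸ K^⊥ → Hom(K, ZMod n)` induced by `W`
  let ρ₀ : B →+ (K →+ ZMod n) :=
    { toFun := fun b => (W.flip b).comp K.subtype
      map_zero' := by ext k; simp
      map_add' := by intro b c; ext k; simp }
  have hρ₀ : ∀ b ∈ H, ρ₀ b = 0 := by
    intro b hb
    ext k
    exact hb k k.2
  let ρ : B ⧸ H →+ (K →+ ZMod n) := QuotientAddGroup.lift H ρ₀ hρ₀
  have hρ : Function.Injective ρ := by
    rw [injective_iff_map_eq_zero]
    intro x hx
    induction x using QuotientAddGroup.induction_on with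
    | H b =>
      rw [QuotientAddGroup.eq_zero_iff]
      intro a ha
      have := DFunLike.congr_fun hx ⟨a, ha⟩
      exact this
  -- the map `K → Hom(B ⧸ K^⊥, ZMod n)` induced by `W`
  have hker : ∀ k : K, ∀ b ∈ H, W k b = 0 := fun k b hb => hb k k.2
  let σ : K →+ ((B ⧸ H) →+ ZMod n) :=
    { toFun := fun k => QuotientAddGroup.lift H (W k) (hker k)
      map_zero' := by ext b; simp
      map_add' := by intro k k'; ext b; simp; rfl }
  have hσ : Function.Injective σ := by
    rw [injective_iff_map_eq_zero]
    intro k hk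
    have : (k : A) = 0 := by
      apply hleft
      intro b
      exact DFunLike.congr_fun hk (QuotientAddGroup.mk b)
    exact Subtype.ext this
  haveI : Finite (K →+ ZMod n) := Finite.of_injective _ DFunLike.coe_injective
  haveI : Finite ((B ⧸ H) →+ ZMod n) := Finite.of_injective _ DFunLike.coe_injective
  have c1 : Nat.card (B ⧸ H) ≤ Nat.card K :=
    le_trans (Nat.card_le_card_of_injective ρ hρ) (card_hom_zmod_le n K)
  have c2 : Nat.card K ≤ Nat.card (B ⧸ H) :=
    le_trans (Nat.card_le_card_of_injective σ hσ) (card_hom_zmod_le n (B ⧸ H))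
  have key : Nat.card K = Nat.card (B ⧸ H) := le_antisymm c2 c1
  calc Nat.card K * Nat.card H = Nat.card (B ⧸ H) * Nat.card H := by rw [key]
    _ = H.index * Nat.card H := by rw [AddSubgroup.index_eq_card]
    _ = Nat.card B := H.index_mul_card
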